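/- arXiv:1206.1660 — 3 statements merged into one kernel-verified Lean document; each statement's English description precedes it below -/
import Mathlib

section
/- Let Σ be a p×p positive definite symmetric real matrix and μ_d a vector in ℝ^p. Let β₀ = Σ⁻¹ μ_d and let A = {k : (β₀)_k ≠ 0} be the support of β₀. Then the quadratic form restricted to A equals the full quadratic form: (μ_d)_A^T (Σ_{AA})⁻¹ (μ_d)_A = μ_d^T Σ⁻¹ μ_d, where Σ_{AA} is the principal submatrix of Σ indexed by A and (μ_d)_A is the subvector of μ_d indexed by A. -/
open Matrix Finset

/-- The restricted discriminant quadratic form `(μ_d)_A^T (Σ_{AA})⁻¹ (μ_d)_A`. -/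
noncomputable def restrictedQuad {p : ℕ} (S : Matrix (Fin p) (Fin p) ℝ) (μ : Fin p → ℝ)
    (A : Finset (Fin p)) : ℝ :=
  (fun k : A => μ k) ⬝ᵥ
    ((S.submatrix (fun i : A => (i : Fin p)) (fun j : A => (j : Fin p)))⁻¹).mulVec
      (fun k : A => μ k)

theorem stmt0 {p : ℕ} (S : Matrix (Fin p) (Fin p) ℝ) (hS : S.PosDef) (μd : Fin p → ℝ)
    (β : Fin p → ℝ) (hβ : β = S⁻¹.mulVec μd)
    (A : Finset (Fin p)) (hA : A = Finset.univ.filter (fun k => β k ≠ 0)) :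
    restrictedQuad S μd A = μd ⬝ᵥ S⁻¹.mulVec μd := by
  have hdet : IsUnit S.det := hS.det_pos.ne'.isUnit
  -- β vanishes off A
  have hzero : ∀ j : Fin p, j ∉ A → β j = 0 := by
    intro j hj
    by_contra h
    exact hj (by simp [hA, h])
  -- S *ᵥ β = μd
  have hSβ : S.mulVec β = μd := by
    rw [hβ, Matrix.mulVec_mulVec, Matrix.mul_nonsing_inv S hdet, Matrix.one_mulVec]
  set T : Matrix A A ℝ := S.submatrix (fun i : A => (i : Fin p)) (fun j : A => (j : Fin p))
    with hT
  -- an auxiliary fact: sums over Fin p of terms supported in A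
  have hsum : ∀ (f : Fin p → ℝ), (∀ j ∉ A, f j = 0) → ∑ j, f j = ∑ j : A, f j := by
    intro f hf
    rw [Finset.sum_coe_sort A f, ← Finset.sum_add_sum_compl A f,
      Finset.sum_eq_zero (fun j hj => hf j (Finset.mem_compl.mp hj)), add_zero]
  -- T is positive definite
  have hTpd : T.PosDef := by
    refine Matrix.PosDef.of_dotProduct_mulVec_pos (hS.1.submatrix _) fun x hx => ?_
    classical
    set y : Fin p → ℝ := fun j => if h : j ∈ A then x ⟨j, h⟩ else 0 with hy
    have hy0 : y ≠ 0 := by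
      intro h
      apply hx
      funext k
      have := congrFun h (k : Fin p)
      simpa [hy, k.2] using this
    have hkey : dotProduct (star y) (S *ᵥ y) = dotProduct (star x) (T *ᵥ x) := by
      simp only [dotProduct, Matrix.mulVec, star, hT, Matrix.submatrix_apply, id]
      rw [hsum _ (fun j hj => by simp [hy, hj])]
      refine Finset.sum_congr rfl fun i _ => ?_
      have hyi : y (i : Fin p) = x i := by simp [hy, i.2]
      rw [hyi]
      congr 1
      rw [hsum (fun j => S (i : Fin p) j * y j) (fun j hj => by simp [hy, hj])]
      exact Finset.sum_congr rfl fun j _ => by simp [hy, j.2]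
    rw [← hkey]
    exact hS.dotProduct_mulVec_pos hy0
  have hTdet : IsUnit T.det := hTpd.det_pos.ne'.isUnit
  -- T *ᵥ (β∘incl) = μd∘incl
  have hTβ : T.mulVec (fun k : A => β k) = fun k : A => μd k := by
    funext i
    have h1 : μd (i : Fin p) = ∑ j, S (i : Fin p) j * β j := by
      rw [← hSβ]; rfl
    simp only [Matrix.mulVec, dotProduct, hT, Matrix.submatrix_apply]
    rw [h1, hsum (fun j => S (i : Fin p) j * β j) (fun j hj => by simp [hzero j hj])]
  -- T⁻¹ *ᵥ μd∘incl = β∘incl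
  have hinv : T⁻¹.mulVec (fun k : A => μd k) = fun k : A => β k := by
    rw [← hTβ, Matrix.mulVec_mulVec, Matrix.nonsing_inv_mul T hTdet, Matrix.one_mulVec]
  unfold restrictedQuad
  rw [← hT, hinv]
  -- dot products
  have hfinal : μd ⬝ᵥ β = (fun k : A => μd k) ⬝ᵥ (fun k : A => β k) := by
    simp only [dotProduct]
    exact hsum (fun k => μd k * β k) (fun j hj => by simp [hzero j hj])
  rw [← hβ, ← hfinal]
end

section
/- Let Σ be a p×p positive definite symmetric real matrix whose eigenvalues all lie in [1/c₀, c₀] for some constant c₀ ≥ 1, let μ_d ∈ ℝ^p, and β₀ = 2Σ⁻¹μ_d. For any index set A₁ ⊆ {1,…,p}, letting s = Σ_{k ∉ A₁} |(β₀)_k|², the difference Δ_p − Δ_{A₁} satisfies 0 ≤ Δ_p − Δ_{A₁} ≤ C·s for a constant C depending only on c₀, where Δ_p = μ_d^T Σ⁻¹ μ_d and Δ_{A₁} = (μ_d)_{A₁}^T (Σ_{A₁A₁})⁻¹ (μ_d)_{A₁}. -/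
open Matrix Finset

section aux

variable {n : Type*} [Fintype n] [DecidableEq n]

-- symmetric dot product swap
lemma symm_dot {M : Matrix n n ℝ} (hM : M.IsHermitian) (v w : n → ℝ) :
    v ⬝ᵥ M.mulVec w = M.mulVec v ⬝ᵥ w := by
  have hMT : Mᵀ = M := by
    have := hM.eq
    rwa [Matrix.conjTranspose_eq_transpose_of_trivial] at this
  rw [Matrix.dotProduct_mulVec, ← Matrix.mulVec_transpose, hMT]

-- quadratic form bounded by c * norm² when eigenvalues ≤ c
lemma quad_le_of_eig {M : Matrix n n ℝ} (hM : M.IsHermitian) {c : ℝ}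
    (h : ∀ i, hM.eigenvalues i ≤ c) (x : n → ℝ) :
    x ⬝ᵥ M.mulVec x ≤ c * (x ⬝ᵥ x) := by
  have hps : (c • (1 : Matrix n n ℝ) - M).PosSemidef := by
    have hU : (hM.eigenvectorUnitary : Matrix n n ℝ) *
        (star (hM.eigenvectorUnitary : Matrix n n ℝ)) = 1 :=
      (Matrix.mem_unitaryGroup_iff).mp hM.eigenvectorUnitary.2
    have key : c • (1 : Matrix n n ℝ) - M =
        (hM.eigenvectorUnitary : Matrix n n ℝ) *
          (Matrix.diagonal (fun i => c - hM.eigenvalues i)) *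
          ((hM.eigenvectorUnitary : Matrix n n ℝ))ᴴ := by
      conv_lhs => rw [hM.spectral_theorem]
      have : (Matrix.diagonal (fun i => c - hM.eigenvalues i)) =
          c • (1 : Matrix n n ℝ) -
            Matrix.diagonal (RCLike.ofReal ∘ hM.eigenvalues) := by
        ext i j
        by_cases h : i = j <;>
          simp [Matrix.diagonal_apply, Matrix.one_apply, h, Matrix.sub_apply]
      rw [this, Matrix.mul_sub, Matrix.sub_mul]
      congr 1
      rw [Matrix.mul_smul, Matrix.mul_one, Matrix.smul_mul]
      rw [show ((hM.eigenvectorUnitary : Matrix n n ℝ))ᴴ =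
        star (hM.eigenvectorUnitary : Matrix n n ℝ) from rfl, hU]
    rw [key]
    exact (Matrix.posSemidef_diagonal_iff.mpr (fun i => sub_nonneg.mpr (h i))).mul_mul_conjTranspose_same _
  have := hps.dotProduct_mulVec_nonneg x
  simp only [star_trivial] at this
  rw [Matrix.sub_mulVec, dotProduct_sub, Matrix.smul_mulVec, Matrix.one_mulVec,
    dotProduct_smul] at this
  have : 0 ≤ c * (x ⬝ᵥ x) - x ⬝ᵥ M.mulVec x := by simpa using this
  linarith

lemma inv_mulVec_self {M : Matrix n n ℝ} (hM : M.PosDef) (μ : n → ℝ) :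
    M.mulVec (M⁻¹.mulVec μ) = μ := by
  rw [Matrix.mulVec_mulVec, Matrix.mul_nonsing_inv _ (isUnit_iff_ne_zero.mpr hM.det_pos.ne'),
    Matrix.one_mulVec]

-- key inequality: 2 b⬝μ − b⬝Mb ≤ μ⬝M⁻¹μ
lemma quad_sup {M : Matrix n n ℝ} (hM : M.PosDef) (μ b : n → ℝ) :
    2 * (b ⬝ᵥ μ) - b ⬝ᵥ M.mulVec b ≤ μ ⬝ᵥ M⁻¹.mulVec μ := by
  set β := M⁻¹.mulVec μ with hβ
  have hMβ : M.mulVec β = μ := inv_mulVec_self hM μ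
  have h0 : 0 ≤ (b - β) ⬝ᵥ M.mulVec (b - β) := by
    have := hM.posSemidef.dotProduct_mulVec_nonneg (b - β)
    simpa using this
  rw [Matrix.mulVec_sub, dotProduct_sub, sub_dotProduct,
    sub_dotProduct, hMβ] at h0
  have hsym : β ⬝ᵥ M.mulVec b = μ ⬝ᵥ b := by rw [symm_dot hM.1, hMβ]
  have hββ : β ⬝ᵥ μ = μ ⬝ᵥ β := dotProduct_comm _ _
  have hbμ : b ⬝ᵥ μ = μ ⬝ᵥ b := dotProduct_comm _ _
  rw [hsym, hββ] at h0
  rw [hbμ]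
  linarith

lemma quad_eq {M : Matrix n n ℝ} (hM : M.PosDef) (μ : n → ℝ) :
    μ ⬝ᵥ M⁻¹.mulVec μ =
      2 * ((M⁻¹.mulVec μ) ⬝ᵥ μ) - (M⁻¹.mulVec μ) ⬝ᵥ M.mulVec (M⁻¹.mulVec μ) := by
  rw [inv_mulVec_self hM μ, dotProduct_comm μ]
  ring

end aux

section ext

variable {p : ℕ} (A : Finset (Fin p))

/-- extension by zero -/
noncomputable def extA (x : A → ℝ) : Fin p → ℝ :=
  fun i => if h : i ∈ A then x ⟨i, h⟩ else 0

lemma dot_extA (w : Fin p → ℝ) (x : A → ℝ) :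
    w ⬝ᵥ extA A x = (fun k : A => w k) ⬝ᵥ x := by
  unfold dotProduct
  rw [Finset.univ_eq_attach,
    ← Finset.sum_subset (Finset.subset_univ A)
      (by intro i _ hi; simp [extA, dif_neg hi]),
    ← Finset.sum_attach A (fun i => w i * extA A x i)]
  apply Finset.sum_congr rfl
  intro i _
  simp [extA, i.2]

lemma extA_dot (v : Fin p → ℝ) (x : A → ℝ) :
    extA A x ⬝ᵥ v = x ⬝ᵥ (fun k : A => v k) := by
  rw [dotProduct_comm, dot_extA, dotProduct_comm]

lemma extA_mulVec_restrict (S : Matrix (Fin p) (Fin p) ℝ) (x : A → ℝ) :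
    (fun k : A => (S.mulVec (extA A x)) k) =
      (S.submatrix (fun i : A => (i : Fin p)) (fun j : A => (j : Fin p))).mulVec x := by
  funext k
  show (S k) ⬝ᵥ extA A x = _
  rw [dot_extA]
  rfl

lemma extA_quad (S : Matrix (Fin p) (Fin p) ℝ) (x : A → ℝ) :
    extA A x ⬝ᵥ S.mulVec (extA A x) =
      x ⬝ᵥ (S.submatrix (fun i : A => (i : Fin p)) (fun j : A => (j : Fin p))).mulVec x := by
  rw [extA_dot, extA_mulVec_restrict]

lemma submatrix_posDef {S : Matrix (Fin p) (Fin p) ℝ} (hS : S.PosDef) :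
    (S.submatrix (fun i : A => (i : Fin p)) (fun j : A => (j : Fin p))).PosDef := by
  refine Matrix.PosDef.of_dotProduct_mulVec_pos ?_ ?_
  · show _ᴴ = _
    rw [Matrix.conjTranspose_submatrix, hS.1.eq]
  · intro x hx
    have hne : extA A x ≠ 0 := by
      intro h
      apply hx
      funext k
      have := congrFun h (k : Fin p)
      simpa [extA, k.2] using this
    have := hS.dotProduct_mulVec_pos hne
    simp only [star_trivial] at this ⊢
    rw [← extA_quad]
    exact this

end ext

theorem stmt1 (c₀ : ℝ) (hc₀ : 1 ≤ c₀) :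
    ∃ C : ℝ, 0 < C ∧
      ∀ (p : ℕ) (S : Matrix (Fin p) (Fin p) ℝ) (hS : S.PosDef)
        (heig : ∀ i, c₀⁻¹ ≤ hS.1.eigenvalues i ∧ hS.1.eigenvalues i ≤ c₀)
        (μd : Fin p → ℝ) (β₀ : Fin p → ℝ) (hβ₀ : β₀ = (2 : ℝ) • S⁻¹.mulVec μd)
        (A₁ : Finset (Fin p)),
        0 ≤ μd ⬝ᵥ S⁻¹.mulVec μd - restrictedQuad S μd A₁ ∧
        μd ⬝ᵥ S⁻¹.mulVec μd - restrictedQuad S μd A₁ ≤ C * ∑ k ∈ A₁ᶜ, (β₀ k) ^ 2 := by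
  refine ⟨c₀, lt_of_lt_of_le one_pos hc₀, ?_⟩
  intro p S hS heig μd β₀ hβ₀ A₁
  have hsub := submatrix_posDef A₁ hS
  set SA := S.submatrix (fun i : A₁ => (i : Fin p)) (fun j : A₁ => (j : Fin p)) with hSA
  set μA : A₁ → ℝ := fun k : A₁ => μd k with hμA
  have hRQ : restrictedQuad S μd A₁ = μA ⬝ᵥ SA⁻¹.mulVec μA := rfl
  set β := S⁻¹.mulVec μd with hβdef
  have hSβ : S.mulVec β = μd := inv_mulVec_self hS μd
  constructor
  · -- lower bound
    set y : A₁ → ℝ := SA⁻¹.mulVec μA with hy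
    have he1 : extA A₁ y ⬝ᵥ μd = y ⬝ᵥ μA := extA_dot A₁ μd y
    have he2 : extA A₁ y ⬝ᵥ S.mulVec (extA A₁ y) = y ⬝ᵥ SA.mulVec y := extA_quad A₁ S y
    have heq := quad_eq hsub μA
    have hle := quad_sup hS μd (extA A₁ y)
    rw [hRQ, heq, ← hy]
    rw [he1] at hle
    rw [he2] at hle
    linarith
  · -- upper bound
    set t : A₁ → ℝ := fun k : A₁ => β k with ht
    set b : Fin p → ℝ := extA A₁ t with hb
    have h1 : 2 * (t ⬝ᵥ μA) - t ⬝ᵥ SA.mulVec t ≤ restrictedQuad S μd A₁ := by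
      rw [hRQ]; exact quad_sup hsub μA t
    have he1 : b ⬝ᵥ μd = t ⬝ᵥ μA := extA_dot A₁ μd t
    have he2 : b ⬝ᵥ S.mulVec b = t ⬝ᵥ SA.mulVec t := extA_quad A₁ S t
    set r : Fin p → ℝ := β - b with hr
    have hkey : μd ⬝ᵥ β - (2 * (b ⬝ᵥ μd) - b ⬝ᵥ S.mulVec b) = r ⬝ᵥ S.mulVec r := by
      rw [hr, Matrix.mulVec_sub, dotProduct_sub, sub_dotProduct,
        sub_dotProduct, hSβ]
      have e1 : β ⬝ᵥ μd = μd ⬝ᵥ β := dotProduct_comm _ _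
      have e2 : b ⬝ᵥ μd = μd ⬝ᵥ b := dotProduct_comm _ _
      have e3 : β ⬝ᵥ S.mulVec b = μd ⬝ᵥ b := by rw [symm_dot hS.1, hSβ]
      rw [e1, e3]
      linarith [e2]
    have hbound : r ⬝ᵥ S.mulVec r ≤ c₀ * (r ⬝ᵥ r) :=
      quad_le_of_eig hS.1 (fun i => (heig i).2) r
    have hrr : r ⬝ᵥ r = ∑ k ∈ A₁ᶜ, (β k) ^ 2 := by
      unfold dotProduct
      rw [← Finset.sum_subset (Finset.subset_univ A₁ᶜ)]
      · apply Finset.sum_congr rfl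
        intro i hi
        have hiA : i ∉ A₁ := Finset.mem_compl.mp hi
        have : r i = β i := by
          simp [hr, hb, extA, dif_neg hiA]
        rw [this, sq]
      · intro i _ hi
        have hiA : i ∈ A₁ := by simpa using hi
        have : r i = 0 := by
          simp [hr, hb, extA, dif_pos hiA, ht]
        rw [this, mul_zero]
    have hβ0 : ∑ k ∈ A₁ᶜ, (β₀ k) ^ 2 = 4 * ∑ k ∈ A₁ᶜ, (β k) ^ 2 := by
      rw [Finset.mul_sum]
      apply Finset.sum_congr rfl
      intro k _
      rw [hβ₀]
      simp [hβdef, Pi.smul_apply]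
      ring
    have hnn : (0 : ℝ) ≤ ∑ k ∈ A₁ᶜ, (β k) ^ 2 :=
      Finset.sum_nonneg fun k _ => sq_nonneg _
    have hc0 : (0 : ℝ) < c₀ := lt_of_lt_of_le one_pos hc₀
    have hfin : μd ⬝ᵥ β - restrictedQuad S μd A₁ ≤ c₀ * ∑ k ∈ A₁ᶜ, (β k) ^ 2 := by
      rw [← hrr]
      have : μd ⬝ᵥ β - restrictedQuad S μd A₁ ≤ r ⬝ᵥ S.mulVec r := by
        rw [← hkey]
        have := h1
        rw [← he1, ← he2] at this
        linarith
      linarith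
    rw [hβ0]
    nlinarith [mul_nonneg hc0.le hnn]
end

section
/- Let Σ be symmetric positive definite with largest eigenvalue at most c₀, μ_d ∈ ℝ^p, β₀ = 2Σ⁻¹μ_d, and A₁ ⊆ {1,…,p}. Then Δ_p − Δ_{A₁} ≤ (c₀/4) Σ_{k∉A₁} |(β₀)_k|², where Δ_p = μ_d^TΣ⁻¹μ_d and Δ_{A₁} = (μ_d)_{A₁}^T(Σ_{A₁A₁})⁻¹(μ_d)_{A₁}. -/
open Matrix Finset

lemma myPosDef_submatrix {m n : Type*} [Fintype m] [Fintype n] [DecidableEq m] [DecidableEq n]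
    {S : Matrix n n ℝ} (hS : S.PosDef) (f : m → n) (hf : Function.Injective f) :
    (S.submatrix f f).PosDef := by
  rw [Matrix.posDef_iff_dotProduct_mulVec]
  constructor
  · have h := hS.1
    ext i j
    have := congrFun (congrFun h (f i)) (f j)
    simpa [Matrix.conjTranspose_apply] using this
  · intro x hx
    set y : n → ℝ := fun k => ∑ i, if f i = k then x i else 0 with hy
    have hyx : ∀ i, y (f i) = x i := by
      intro i
      simp [hy, hf.eq_iff, Finset.sum_ite_eq' Finset.univ i x]
    have hy0 : y ≠ 0 := by
      intro h
      apply hx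
      funext i
      have := congrFun h (f i)
      simpa [hyx i] using this
    have hpos := hS.dotProduct_mulVec_pos hy0
    have hSy : ∀ k, ∑ l, S k l * y l = ∑ j, S k (f j) * x j := by
      intro k
      simp only [hy, Finset.mul_sum, mul_ite, mul_zero]
      rw [Finset.sum_comm]
      refine Finset.sum_congr rfl fun j _ => ?_
      rw [Finset.sum_ite_eq Finset.univ (f j) (fun l => S k l * x j)]
      simp
    have key : star x ⬝ᵥ (S.submatrix f f) *ᵥ x = star y ⬝ᵥ S *ᵥ y := by
      simp only [star_trivial, dotProduct, mulVec, Matrix.submatrix_apply]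
      calc ∑ i, x i * ∑ j, S (f i) (f j) * x j
          = ∑ i, x i * ∑ l, S (f i) l * y l := by
            refine Finset.sum_congr rfl fun i _ => ?_
            rw [hSy (f i)]
        _ = ∑ k, y k * ∑ l, S k l * y l := by
            simp only [hy, Finset.sum_mul, ite_mul, zero_mul]
            rw [Finset.sum_comm]
            refine Finset.sum_congr rfl fun i _ => ?_
            rw [Finset.sum_ite_eq Finset.univ (f i) (fun k => x i * ∑ l, S k l * y l)]
            simp
            exact Or.inl rfl
    rw [key]; exact hpos

lemma myQuadBound {n : Type*} [Fintype n] [DecidableEq n] {M : Matrix n n ℝ}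
    (hM : M.PosDef) (μ x : n → ℝ) :
    2 * (x ⬝ᵥ μ) - x ⬝ᵥ M *ᵥ x ≤ μ ⬝ᵥ M⁻¹ *ᵥ μ := by
  set z := M⁻¹ *ᵥ μ with hz
  have hMz : M *ᵥ z = μ := by
    rw [hz, Matrix.mulVec_mulVec, Matrix.mul_nonsing_inv _ hM.det_pos.ne'.isUnit, Matrix.one_mulVec]
  have h0 : (0:ℝ) ≤ star (x - z) ⬝ᵥ M *ᵥ (x - z) := hM.posSemidef.dotProduct_mulVec_nonneg (x - z)
  have hsym : z ⬝ᵥ (M *ᵥ x) = μ ⬝ᵥ x := by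
    rw [Matrix.dotProduct_mulVec, ← Matrix.mulVec_transpose]
    have : Mᵀ = M := by
      have := hM.1
      rwa [Matrix.IsHermitian, Matrix.conjTranspose_eq_transpose_of_trivial] at this
    rw [this, hMz]
  have hexp : star (x - z) ⬝ᵥ M *ᵥ (x - z)
      = x ⬝ᵥ M *ᵥ x - 2 * (x ⬝ᵥ μ) + μ ⬝ᵥ M⁻¹ *ᵥ μ := by
    rw [star_trivial, Matrix.mulVec_sub, sub_dotProduct, dotProduct_sub,
      dotProduct_sub, hMz]
    have h1 : x ⬝ᵥ μ = μ ⬝ᵥ x := dotProduct_comm _ _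
    have h2 : z ⬝ᵥ μ = μ ⬝ᵥ M⁻¹ *ᵥ μ := by rw [hz, dotProduct_comm]
    rw [hsym, h2, h1]
    ring
  rw [hexp] at h0
  linarith

lemma myDotRestrict {p : ℕ} (A : Finset (Fin p)) (v u : Fin p → ℝ)
    (hv : ∀ k ∉ A, v k = 0) :
    v ⬝ᵥ u = (fun k : A => v k) ⬝ᵥ (fun k : A => u k) := by
  rw [dotProduct, dotProduct, Finset.sum_coe_sort A (fun k => v k * u k)]
  refine (Finset.sum_subset (Finset.subset_univ A) fun k _ hk => ?_).symm
  rw [hv k hk, zero_mul]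

lemma myLambdaMax {p : ℕ} (c₀ : ℝ) {S : Matrix (Fin p) (Fin p) ℝ} (hS : S.PosDef)
    (heig : ∀ i, hS.1.eigenvalues i ≤ c₀) (w : Fin p → ℝ) :
    w ⬝ᵥ S *ᵥ w ≤ c₀ * (w ⬝ᵥ w) := by
  set U : Matrix (Fin p) (Fin p) ℝ := (hS.1.eigenvectorUnitary : Matrix (Fin p) (Fin p) ℝ) with hU
  have hUU : U * star U = 1 := (Matrix.mem_unitaryGroup_iff).mp hS.1.eigenvectorUnitary.2
  have hN : (c₀ • (1 : Matrix (Fin p) (Fin p) ℝ) - S)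
      = U * Matrix.diagonal (fun i => c₀ - hS.1.eigenvalues i) * star U := by
    have hspec := hS.1.spectral_theorem
    rw [Unitary.conjStarAlgAut_apply] at hspec
    have hdiag : Matrix.diagonal (fun i => c₀ - hS.1.eigenvalues i)
        = Matrix.diagonal (fun _ => c₀) - Matrix.diagonal (RCLike.ofReal ∘ hS.1.eigenvalues) := by
      rw [Matrix.diagonal_sub]
      congr
    rw [hdiag, Matrix.mul_sub, Matrix.sub_mul, ← hspec]
    congr 1
    have : Matrix.diagonal (fun _ : Fin p => c₀) = c₀ • (1 : Matrix (Fin p) (Fin p) ℝ) := by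
      rw [Matrix.smul_one_eq_diagonal]
    rw [this, Matrix.mul_smul, Matrix.smul_mul, Matrix.mul_one, hUU]
  have hpsd : (c₀ • (1 : Matrix (Fin p) (Fin p) ℝ) - S).PosSemidef := by
    rw [hN]
    have hd : (Matrix.diagonal (fun i => c₀ - hS.1.eigenvalues i)).PosSemidef :=
      Matrix.posSemidef_diagonal_iff.mpr fun i => by linarith [heig i]
    simpa [Matrix.star_eq_conjTranspose] using hd.mul_mul_conjTranspose_same U
  have h0 := hpsd.dotProduct_mulVec_nonneg w
  rw [star_trivial, Matrix.sub_mulVec, Matrix.smul_mulVec, Matrix.one_mulVec,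
    dotProduct_sub, dotProduct_smul] at h0
  simp only [smul_eq_mul] at h0
  linarith

lemma mySymmDot {n : Type*} [Fintype n] {M : Matrix n n ℝ} (hM : Mᵀ = M) (a b : n → ℝ) :
    a ⬝ᵥ M *ᵥ b = b ⬝ᵥ M *ᵥ a := by
  rw [Matrix.dotProduct_mulVec, ← Matrix.mulVec_transpose, hM, dotProduct_comm]

theorem stmt10 {p : ℕ} (c₀ : ℝ) (S : Matrix (Fin p) (Fin p) ℝ) (hS : S.PosDef)
    (heig : ∀ i, hS.1.eigenvalues i ≤ c₀)
    (μd : Fin p → ℝ) (β₀ : Fin p → ℝ) (hβ₀ : β₀ = (2 : ℝ) • S⁻¹.mulVec μd)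
    (A₁ : Finset (Fin p)) :
    μd ⬝ᵥ S⁻¹.mulVec μd - restrictedQuad S μd A₁ ≤ c₀ / 4 * ∑ k ∈ A₁ᶜ, (β₀ k) ^ 2 := by
  classical
  set b : Fin p → ℝ := S⁻¹ *ᵥ μd with hb
  have hSsym : Sᵀ = S := by
    have := hS.1
    rwa [Matrix.IsHermitian, Matrix.conjTranspose_eq_transpose_of_trivial] at this
  have hSb : S *ᵥ b = μd := by
    rw [hb, Matrix.mulVec_mulVec, Matrix.mul_nonsing_inv _ hS.det_pos.ne'.isUnit,
      Matrix.one_mulVec]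
  set w : Fin p → ℝ := fun k => if k ∈ A₁ then 0 else b k with hw
  set v : Fin p → ℝ := fun k => if k ∈ A₁ then b k else 0 with hv
  have hbvw : b = v + w := by
    funext k; by_cases h : k ∈ A₁ <;> simp [hv, hw, h]
  have hv0 : ∀ k ∉ A₁, v k = 0 := fun k hk => by simp [hv, hk]
  set M := S.submatrix (fun i : A₁ => (i : Fin p)) (fun j : A₁ => (j : Fin p)) with hM
  have hMpd : M.PosDef := myPosDef_submatrix hS _ Subtype.val_injective
  set x : A₁ → ℝ := fun k => v k with hx
  set μA : A₁ → ℝ := fun k => μd k with hμA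
  have hdot1 : v ⬝ᵥ μd = x ⬝ᵥ μA := myDotRestrict A₁ v μd hv0
  have hmul : M *ᵥ x = fun i : A₁ => (S *ᵥ v) i := by
    funext i
    have h := myDotRestrict A₁ v (fun j => S i j) hv0
    simp only [Matrix.mulVec, dotProduct, Matrix.submatrix_apply, hM] at h ⊢
    simpa [mul_comm] using h.symm
  have hdot2 : v ⬝ᵥ S *ᵥ v = x ⬝ᵥ M *ᵥ x := by
    rw [myDotRestrict A₁ v (S *ᵥ v) hv0, hmul]
  have hvar : 2 * (x ⬝ᵥ μA) - x ⬝ᵥ M *ᵥ x ≤ μA ⬝ᵥ M⁻¹ *ᵥ μA := myQuadBound hMpd μA x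
  have hRQ : restrictedQuad S μd A₁ = μA ⬝ᵥ M⁻¹ *ᵥ μA := rfl
  -- key algebraic identity
  have hSv : S *ᵥ v = μd - S *ᵥ w := by
    have : S *ᵥ (v + w) = μd := by rw [← hbvw]; exact hSb
    rw [Matrix.mulVec_add] at this
    funext k
    have := congrFun this k
    simp only [Pi.add_apply] at this
    simp only [Pi.sub_apply]
    linarith
  have hvSw : v ⬝ᵥ S *ᵥ w = w ⬝ᵥ S *ᵥ v := mySymmDot hSsym v w
  have hkey : 2 * (v ⬝ᵥ μd) - v ⬝ᵥ S *ᵥ v = μd ⬝ᵥ b - w ⬝ᵥ S *ᵥ w := by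
    have e1 : v ⬝ᵥ S *ᵥ v = v ⬝ᵥ μd - w ⬝ᵥ μd + w ⬝ᵥ S *ᵥ w := by
      rw [hSv, dotProduct_sub, hvSw, hSv, dotProduct_sub]
      ring
    have e2 : μd ⬝ᵥ b = v ⬝ᵥ μd + w ⬝ᵥ μd := by
      rw [hbvw, dotProduct_add, dotProduct_comm μd v, dotProduct_comm μd w]
    rw [e1, e2]; ring
  -- lambda max bound
  have hlam : w ⬝ᵥ S *ᵥ w ≤ c₀ * (w ⬝ᵥ w) := myLambdaMax c₀ hS heig w
  have hww : w ⬝ᵥ w = ∑ k ∈ A₁ᶜ, (b k) ^ 2 := by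
    rw [dotProduct]
    rw [← Finset.sum_subset (Finset.subset_univ A₁ᶜ) (fun k _ hk => by
      have : k ∈ A₁ := by simpa using hk
      simp [hw, this])]
    refine Finset.sum_congr rfl fun k hk => ?_
    have : k ∉ A₁ := Finset.mem_compl.mp hk
    simp [hw, this, sq]
  have hβsum : ∑ k ∈ A₁ᶜ, (β₀ k) ^ 2 = 4 * ∑ k ∈ A₁ᶜ, (b k) ^ 2 := by
    rw [Finset.mul_sum]
    refine Finset.sum_congr rfl fun k _ => ?_
    rw [hβ₀]
    simp only [Pi.smul_apply, smul_eq_mul, ← hb]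
    ring
  have hstart : μd ⬝ᵥ S⁻¹ *ᵥ μd = μd ⬝ᵥ b := rfl
  have hchain : 2 * (v ⬝ᵥ μd) - v ⬝ᵥ S *ᵥ v ≤ restrictedQuad S μd A₁ := by
    rw [hdot1, hdot2, hRQ]; exact hvar
  rw [hstart, hβsum]
  rw [hww] at hlam
  linarith
end
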